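/- For each λ ∈ [0,1] there exists a symmetric positive definite matrix P_λ ∈ ℝ^{2×2} such that A(λ)ᵀ P_λ + P_λ A(λ) = −I. -/

import Mathlib

open Matrix

lemma quad_form_pos (p q r a b : ℝ) (hp : 0 < p) (hdet : 0 < p * r - q ^ 2)
    (hab : a ≠ 0 ∨ b ≠ 0) : 0 < a * (p * a + q * b) + b * (q * a + r * b) := by
  rcases eq_or_ne b 0 with hb | hb
  · subst hb
    have ha : a ≠ 0 := by tauto
    have : 0 < a ^ 2 := by positivity
    nlinarith
  · have hb2 : 0 < b ^ 2 := by positivity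
    nlinarith [sq_nonneg (p * a + q * b), mul_pos hdet hb2]

/-- For each λ ∈ [0,1] there exists a symmetric positive definite P with
A(λ)ᵀ P + P A(λ) = −I, where A(λ) = λA₁ + (1−λ)A₂. -/
theorem lyapunov_equation_A_lambda :
    ∀ l ∈ Set.Icc (0:ℝ) 1,
      ∃ P : Matrix (Fin 2) (Fin 2) ℝ, P.IsSymm ∧ P.PosDef ∧
        (l • !![(0:ℝ), 2; -(1/2), -(1/10)] + (1 - l) • !![(-(1/10):ℝ), 1/2; -2, 0])ᵀ * P
          + P * (l • !![(0:ℝ), 2; -(1/2), -(1/10)] + (1 - l) • !![(-(1/10):ℝ), 1/2; -2, 0])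
          = -1 := by
  rintro l ⟨h0, h1⟩
  have hD : (113*l^2 - 113*l - 50 : ℝ) < 0 := by nlinarith
  have hD' : (113*l^2 - 113*l - 50 : ℝ) ≠ 0 := ne_of_lt hD
  have hp : (0:ℝ) < (935*l - 1250)/(113*l^2 - 113*l - 50) :=
    div_pos_of_neg_of_neg (by nlinarith) hD
  have hdet : (0:ℝ) < (935*l - 1250)/(113*l^2 - 113*l - 50)
        * ((-935*l - 315)/(113*l^2 - 113*l - 50))
        - ((50 - 100*l)/(113*l^2 - 113*l - 50))^2 := by
    have h : (935*l - 1250)/(113*l^2 - 113*l - 50)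
        * ((-935*l - 315)/(113*l^2 - 113*l - 50))
        - ((50 - 100*l)/(113*l^2 - 113*l - 50))^2
        = (-884225*l^2 + 884225*l + 391250)/(113*l^2 - 113*l - 50)^2 := by
      field_simp
      ring
    rw [h]
    apply div_pos (by nlinarith) (by positivity)
  refine ⟨!![(935*l - 1250)/(113*l^2 - 113*l - 50), (50 - 100*l)/(113*l^2 - 113*l - 50);
            (50 - 100*l)/(113*l^2 - 113*l - 50), (-935*l - 315)/(113*l^2 - 113*l - 50)],
    ?_, ⟨?_, ?_⟩, ?_⟩
  · ext i j
    fin_cases i <;> fin_cases j <;> simp [Matrix.IsSymm]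
  · exact Matrix.IsHermitian.ext fun i j => by
      fin_cases i <;> fin_cases j <;> simp
  · intro x hx
    have hx' : x 0 ≠ 0 ∨ x 1 ≠ 0 := by
      by_contra h
      push_neg at h
      exact hx (Finsupp.ext fun i => by fin_cases i <;> simp [h.1, h.2])
    rw [Finsupp.sum_fintype _ _ (by simp)]
    simp only [Finsupp.sum_fintype, mul_zero, implies_true]
    simp only [dotProduct, Matrix.mulVec, dotProduct, Fin.sum_univ_two,
      Pi.star_apply, star_trivial, Matrix.cons_val', Matrix.cons_val_zero, Matrix.cons_val_one,
      Matrix.head_cons, Matrix.empty_val', Matrix.cons_val_fin_one, Matrix.head_fin_const,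
      Matrix.of_apply]
    exact (quad_form_pos _ _ _ _ _ hp hdet hx').trans_eq (by ring)
  · ext i j
    fin_cases i <;> fin_cases j <;>
      · simp [Matrix.mul_apply, Fin.sum_univ_two, Matrix.add_apply, Matrix.smul_apply,
          Matrix.transpose_apply, Matrix.one_apply, Matrix.vecHead, Matrix.vecTail]
        field_simp [hD', show (l * 113 * (l - 1) - 50 : ℝ) ≠ 0 from fun h => hD' (by linear_combination h)]
        ring
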